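/- Let C = ⟨(b|0), (ℓ | fh + 2f)⟩ be a Z2Z4-additive cyclic code with β odd and fgh = x^β − 1 in Z4[x]. If the order-two subcode satisfies C_b = ⟨(b|0), (0|2f)⟩, then Φ(C) is a linear binary code if and only if φ(C_Y) is a linear binary code. -/
import Mathlib


open Polynomial

noncomputable section

abbrev Z2 := ZMod 2
abbrev Z4 := ZMod 4

/-- Coefficientwise reduction modulo 2. -/
def ρ : Z4 →+* Z2 := ZMod.castHom (show 2 ∣ 4 by norm_num) Z2

/-- The quotient ring `R[x]/(x^n - 1)`. -/
abbrev QR (R : Type) [CommRing R] (n : ℕ) :=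
  Polynomial R ⧸ Ideal.span {(Polynomial.X : Polynomial R) ^ n - 1}

def pmk {R : Type} [CommRing R] (n : ℕ) (p : Polynomial R) : QR R n :=
  Ideal.Quotient.mk _ p

/-- `Z4[x]`-module structure on `Z2[x]/(x^n-1)` via reduction mod 2;
this gives the action `p ⋆ (b | a) = (p̃ b | p a)` on the product. -/
instance (n : ℕ) : Module (Polynomial Z4) (QR Z2 n) :=
  Module.compHom _ ((Ideal.Quotient.mk _).comp (mapRingHom ρ) : Polynomial Z4 →+* QR Z2 n)

def hat (u : Z4) : Z2 := ((u.val / 2 : ℕ) : Z2)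

def til (u : Z4) : Z2 := ((u.val : ℕ) : Z2)

/-- The Gray map `φ(u') = (û' | ũ' + û')`, with the second block of coordinates
indexed by the right summand. -/
def gray {ι : Type} (u : ι → Z4) : (ι ⊕ ι) → Z2 :=
  Sum.elim (fun i => hat (u i)) (fun i => til (u i) + hat (u i))

/-- The extended Gray map `Φ(u | u') = (u | φ(u'))`. -/
def extGray {ι κ : Type} (v : (ι → Z2) × (κ → Z4)) : (ι → Z2) × ((κ ⊕ κ) → Z2) :=
  (v.1, gray v.2)

/-- Identification of `Z2^n` with `Z2[x]/(x^n-1)`. -/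
def toQ2 {n : ℕ} (u : Fin n → Z2) : QR Z2 n :=
  pmk n (∑ i, Polynomial.C (u i) * Polynomial.X ^ (i : ℕ))

/-- Identification of `Z4^n` with `Z4[x]/(x^n-1)`. -/
def toQ4 {n : ℕ} (u : Fin n → Z4) : QR Z4 n :=
  pmk n (∑ i, Polynomial.C (u i) * Polynomial.X ^ (i : ℕ))

/-- The standard polynomial identification of `Z2^α × Z4^β` with `R_{α,β}`. -/
def ident {α β : ℕ} (v : (Fin α → Z2) × (Fin β → Z4)) : QR Z2 α × QR Z4 β :=
  (toQ2 v.1, toQ4 v.2)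

/-- Right cyclic shift: `(u_0,…,u_{n-1}) ↦ (u_{n-1},u_0,…,u_{n-2})`. -/
def shiftR {n : ℕ} {R : Type} (u : Fin n → R) : Fin n → R :=
  fun i => u ((finRotate n).symm i)

/-- Simultaneous cyclic shift on both blocks of `Z2^α × Z4^β`. -/
def bshift {α β : ℕ} (v : (Fin α → Z2) × (Fin β → Z4)) : (Fin α → Z2) × (Fin β → Z4) :=
  (shiftR v.1, shiftR v.2)

/-- `IsTensorSquare n p q` says that `q = (p ⊗ p)`: `q` is the (monic) divisor of
`x^n - 1` in `Z2[x]` whose roots (in the splitting field of `x^n-1`) are exactly the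
products of pairs of roots of `p`. -/
def IsTensorSquare (n : ℕ) (p q : Polynomial Z2) : Prop :=
  q ∣ (Polynomial.X ^ n - 1) ∧ q.Monic ∧
    ∀ z : ((Polynomial.X : Polynomial Z2) ^ n - 1).SplittingField,
      Polynomial.aeval z q = 0 ↔
        ∃ z₁ z₂, Polynomial.aeval z₁ p = 0 ∧ Polynomial.aeval z₂ p = 0 ∧ z = z₁ * z₂

/-- The Nechaev permutation on `Z2^{2n}` (coordinates indexed by `Fin n ⊕ Fin n`,
with `inr i` standing for position `n + i`): it swaps positions `2i+1` and `n + 2i+1`. -/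
def nechaev {n : ℕ} (v : (Fin n ⊕ Fin n) → Z2) : (Fin n ⊕ Fin n) → Z2 :=
  Sum.elim (fun i => if Odd (i : ℕ) then v (Sum.inr i) else v (Sum.inl i))
    (fun i => if Odd (i : ℕ) then v (Sum.inl i) else v (Sum.inr i))

/-- The extended Nechaev–Gray map `Ψ(u | u') = (u | σ(φ(u')))`. -/
def nechaevGrayExt {α β : ℕ} (v : (Fin α → Z2) × (Fin β → Z4)) :
    (Fin α → Z2) × ((Fin β ⊕ Fin β) → Z2) :=
  (v.1, nechaev (gray v.2))

/-- Identification of `Z2^{2n}` (indexed by `Fin n ⊕ Fin n`) with `Z2[x]/(x^{2n}-1)`. -/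
def toQ2D {n : ℕ} (w : (Fin n ⊕ Fin n) → Z2) : QR Z2 (2 * n) :=
  pmk (2 * n) (∑ i : Fin n,
    (Polynomial.C (w (Sum.inl i)) * Polynomial.X ^ (i : ℕ) +
      Polynomial.C (w (Sum.inr i)) * Polynomial.X ^ (n + (i : ℕ))))

/-- Identification of `Z2^α × Z2^{2β}` with `Z2[x]/(x^α-1) × Z2[x]/(x^{2β}-1)`. -/
def pairD {α β : ℕ} (v : (Fin α → Z2) × ((Fin β ⊕ Fin β) → Z2)) :
    QR Z2 α × QR Z2 (2 * β) :=
  (toQ2 v.1, toQ2D v.2)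

def leeWt (u : Z4) : ℕ := min u.val (4 - u.val)

def leeDist {n : ℕ} (u v : Fin n → Z4) : ℕ := ∑ i, leeWt (u i - v i)

lemma gray_scalar : ∀ a b : Z4,
    hat (a + b + 2 * (a * b)) = hat a + hat b ∧
    til (a + b + 2 * (a * b)) + hat (a + b + 2 * (a * b)) =
      (til a + hat a) + (til b + hat b) := by decide

lemma gray_scalar_inj : ∀ a b : Z4,
    hat a = hat b → til a + hat a = til b + hat b → a = b := by decide

lemma gray_add' {ι : Type} (u v : ι → Z4) :
    gray (u + v + fun i => 2 * (u i * v i)) = gray u + gray v := by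
  funext x
  cases x with
  | inl i => simpa [gray] using (gray_scalar (u i) (v i)).1
  | inr i => simpa [gray] using (gray_scalar (u i) (v i)).2

lemma gray_zero' {ι : Type} : gray (0 : ι → Z4) = 0 := by
  funext x; cases x <;> simp [gray, hat, til]

lemma gray_injective {ι : Type} : Function.Injective (gray (ι := ι)) := by
  intro u v h
  funext i
  exact gray_scalar_inj _ _ (by simpa [gray] using congrFun h (Sum.inl i))
    (by simpa [gray] using congrFun h (Sum.inr i))

lemma toQ2_add {n : ℕ} (u v : Fin n → Z2) : toQ2 (u + v) = toQ2 u + toQ2 v := by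
  unfold toQ2 pmk
  rw [← map_add, ← Finset.sum_add_distrib]
  congr 1
  refine Finset.sum_congr rfl fun i _ => ?_
  simp [add_mul]

lemma toQ2_sub {n : ℕ} (u v : Fin n → Z2) : toQ2 (u - v) = toQ2 u - toQ2 v := by
  unfold toQ2 pmk
  rw [← map_sub, ← Finset.sum_sub_distrib]
  congr 1
  refine Finset.sum_congr rfl fun i _ => ?_
  simp [sub_mul]

lemma toQ2_zero {n : ℕ} : toQ2 (0 : Fin n → Z2) = 0 := by
  simp [toQ2, pmk]

lemma toQ4_add {n : ℕ} (u v : Fin n → Z4) : toQ4 (u + v) = toQ4 u + toQ4 v := by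
  unfold toQ4 pmk
  rw [← map_add, ← Finset.sum_add_distrib]
  congr 1
  refine Finset.sum_congr rfl fun i _ => ?_
  simp [add_mul]

lemma toQ4_sub {n : ℕ} (u v : Fin n → Z4) : toQ4 (u - v) = toQ4 u - toQ4 v := by
  unfold toQ4 pmk
  rw [← map_sub, ← Finset.sum_sub_distrib]
  congr 1
  refine Finset.sum_congr rfl fun i _ => ?_
  simp [sub_mul]

lemma toQ4_zero {n : ℕ} : toQ4 (0 : Fin n → Z4) = 0 := by
  simp [toQ4, pmk]

lemma ident_add {α β : ℕ} (u v : (Fin α → Z2) × (Fin β → Z4)) :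
    ident (u + v) = ident u + ident v := by
  simp [ident, toQ2_add, toQ4_add, Prod.ext_iff]

lemma ident_sub {α β : ℕ} (u v : (Fin α → Z2) × (Fin β → Z4)) :
    ident (u - v) = ident u - ident v := by
  simp [ident, toQ2_sub, toQ4_sub, Prod.ext_iff]

lemma ident_zero {α β : ℕ} : ident (0 : (Fin α → Z2) × (Fin β → Z4)) = 0 := by
  simp [ident, toQ2_zero, toQ4_zero, Prod.ext_iff]

lemma extGray_add' {α β : ℕ} (u v : (Fin α → Z2) × (Fin β → Z4)) :
    extGray (u + v + ((0 : Fin α → Z2), fun i => 2 * (u.2 i * v.2 i))) =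
      extGray u + extGray v := by
  unfold extGray
  refine Prod.ext ?_ ?_
  · simp
  · have : (u + v + ((0 : Fin α → Z2), fun i => 2 * (u.2 i * v.2 i))).2
        = u.2 + v.2 + fun i => 2 * (u.2 i * v.2 i) := rfl
    rw [this, gray_add']
    rfl

lemma extGray_injective {α β : ℕ} :
    Function.Injective (extGray (ι := Fin α) (κ := Fin β)) := by
  intro u v h
  obtain ⟨h1, h2⟩ := Prod.ext_iff.mp h
  exact Prod.ext h1 (gray_injective h2)

lemma extGray_zero {α β : ℕ} :
    extGray (0 : (Fin α → Z2) × (Fin β → Z4)) = 0 := by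
  refine Prod.ext rfl ?_
  show gray 0 = 0
  exact gray_zero'

lemma star_mem_C {α β : ℕ} (b : Polynomial Z2) (f : Polynomial Z4)
    (C : Submodule (Polynomial Z4) (QR Z2 α × QR Z4 β))
    (hCb : {c : QR Z2 α × QR Z4 β | c ∈ C ∧ 2 • c = 0} =
      (Submodule.span (Polynomial Z4)
        {((pmk α b : QR Z2 α), (0 : QR Z4 β)), (0, pmk β (2 * f))} : Set _))
    (w : (Fin α → Z2) × (Fin β → Z4)) (hw : ident w ∈ C)
    (hw2 : ∀ i, ∃ a, w.2 i = 2 * a) :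
    ((0 : QR Z2 α), toQ4 w.2) ∈ C := by
  have hww : w + w = 0 := by
    refine Prod.ext ?_ ?_
    · funext i
      show w.1 i + w.1 i = 0
      revert i
      intro i
      generalize w.1 i = a
      revert a
      decide
    · funext i
      obtain ⟨a, ha⟩ := hw2 i
      show w.2 i + w.2 i = 0
      rw [ha]
      clear ha
      revert a
      decide
  have h2 : 2 • ident w = 0 := by
    rw [two_smul ℕ, ← ident_add, hww, ident_zero]
  have hmem : ident w ∈ {c : QR Z2 α × QR Z4 β | c ∈ C ∧ 2 • c = 0} := ⟨hw, h2⟩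
  rw [hCb, SetLike.mem_coe] at hmem
  obtain ⟨p, q, hpq⟩ := Submodule.mem_span_pair.mp hmem
  have hsnd : q • pmk β (2 * f) = toQ4 w.2 := by
    have := congrArg Prod.snd hpq
    simpa [ident] using this
  have heq : (((0 : QR Z2 α), toQ4 w.2) : QR Z2 α × QR Z4 β)
      = q • (((0 : QR Z2 α), pmk β (2 * f)) : QR Z2 α × QR Z4 β) := by
    refine Prod.ext ?_ ?_
    · simp
    · simpa using hsnd.symm
  rw [heq]
  have hg : (((0 : QR Z2 α), pmk β (2 * f)) : QR Z2 α × QR Z4 β) ∈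
      Submodule.span (Polynomial Z4)
        {((pmk α b : QR Z2 α), (0 : QR Z4 β)), (0, pmk β (2 * f))} :=
    Submodule.subset_span (by simp)
  have hq := Submodule.smul_mem _ q hg
  have hfin : q • (((0 : QR Z2 α), pmk β (2 * f)) : QR Z2 α × QR Z4 β) ∈
      {c : QR Z2 α × QR Z4 β | c ∈ C ∧ 2 • c = 0} := by
    rw [hCb]; exact hq
  exact hfin.1

/-- Let `C = ⟨(b|0), (ℓ | fh+2f)⟩` with `β` odd and `fgh = x^β-1`. If the
order-two subcode is `C_b = ⟨(b|0), (0|2f)⟩`, then `Φ(C)` is linear iff `φ(C_Y)` is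
linear. -/
theorem extGray_linear_iff_gray_CY_linear (α β : ℕ) (hβ : Odd β)
    (b ℓ : Polynomial Z2) (f g h : Polynomial Z4)
    (hb : b ∣ Polynomial.X ^ α - 1)
    (hfgh : f * g * h = Polynomial.X ^ β - 1)
    (C : Submodule (Polynomial Z4) (QR Z2 α × QR Z4 β))
    (hC : C = Submodule.span (Polynomial Z4)
      {((pmk α b : QR Z2 α), (0 : QR Z4 β)), (pmk α ℓ, pmk β (f * h + 2 * f))})
    (hCb : {c : QR Z2 α × QR Z4 β | c ∈ C ∧ 2 • c = 0} =
      (Submodule.span (Polynomial Z4)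
        {((pmk α b : QR Z2 α), (0 : QR Z4 β)), (0, pmk β (2 * f))} : Set _)) :
    (∃ S : Submodule Z2 ((Fin α → Z2) × ((Fin β ⊕ Fin β) → Z2)),
        (S : Set _) = extGray (ι := Fin α) (κ := Fin β) ''
          {v : (Fin α → Z2) × (Fin β → Z4) | ident v ∈ C}) ↔
      ∃ T : Submodule Z2 ((Fin β ⊕ Fin β) → Z2),
        (T : Set _) = gray (ι := Fin β) ''
          (Prod.snd '' {v : (Fin α → Z2) × (Fin β → Z4) | ident v ∈ C}) := by
  classical
  set D : Set ((Fin α → Z2) × (Fin β → Z4)) := {v | ident v ∈ C} with hDdef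
  let P : Prop := ∀ u ∈ D, ∀ v ∈ D,
    (((0 : QR Z2 α), toQ4 (fun i => 2 * (u.2 i * v.2 i))) : QR Z2 α × QR Z4 β) ∈ C
  have hDadd : ∀ u ∈ D, ∀ v ∈ D, u + v ∈ D := fun u hu v hv => by
    show ident (u + v) ∈ C
    rw [ident_add]; exact C.add_mem hu hv
  have hDsub : ∀ u ∈ D, ∀ v ∈ D, u - v ∈ D := fun u hu v hv => by
    show ident (u - v) ∈ C
    rw [ident_sub]; exact C.sub_mem hu hv
  have hD0 : (0 : (Fin α → Z2) × (Fin β → Z4)) ∈ D := by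
    show ident 0 ∈ C
    rw [ident_zero]; exact C.zero_mem
  have hidentE : ∀ u v : (Fin α → Z2) × (Fin β → Z4),
      ident (((0 : Fin α → Z2), fun i => 2 * (u.2 i * v.2 i)) :
          (Fin α → Z2) × (Fin β → Z4))
        = (((0 : QR Z2 α), toQ4 (fun i => 2 * (u.2 i * v.2 i))) :
            QR Z2 α × QR Z4 β) := by
    intro u v
    show (toQ2 0, toQ4 _) = _
    rw [toQ2_zero]
  have hPel : P → ∀ u ∈ D, ∀ v ∈ D,
      u + v + (((0 : Fin α → Z2), fun i => 2 * (u.2 i * v.2 i)) :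
        (Fin α → Z2) × (Fin β → Z4)) ∈ D := by
    intro hP u hu v hv
    have he : (((0 : Fin α → Z2), fun i => 2 * (u.2 i * v.2 i)) :
        (Fin α → Z2) × (Fin β → Z4)) ∈ D := by
      show ident _ ∈ C
      rw [hidentE u v]
      exact hP u hu v hv
    exact hDadd _ (hDadd u hu v hv) _ he
  have hS_of_P : P → ∃ S : Submodule Z2 ((Fin α → Z2) × ((Fin β ⊕ Fin β) → Z2)),
      (S : Set _) = extGray (ι := Fin α) (κ := Fin β) '' D := by
    intro hP
    refine ⟨{ carrier := extGray (ι := Fin α) (κ := Fin β) '' D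
              zero_mem' := ⟨0, hD0, extGray_zero⟩
              add_mem' := ?_
              smul_mem' := ?_ }, rfl⟩
    · rintro x y ⟨u, hu, rfl⟩ ⟨v, hv, rfl⟩
      exact ⟨_, hPel hP u hu v hv, extGray_add' u v⟩
    · intro c x hx
      have hc : c = 0 ∨ c = 1 := by revert c; decide
      rcases hc with rfl | rfl
      · rw [zero_smul]
        exact ⟨0, hD0, extGray_zero⟩
      · rw [one_smul]
        exact hx
  have hT_of_P : P → ∃ T : Submodule Z2 ((Fin β ⊕ Fin β) → Z2),
      (T : Set _) = gray (ι := Fin β) '' (Prod.snd '' D) := by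
    intro hP
    refine ⟨{ carrier := gray (ι := Fin β) '' (Prod.snd '' D)
              zero_mem' := ⟨0, ⟨0, hD0, rfl⟩, gray_zero'⟩
              add_mem' := ?_
              smul_mem' := ?_ }, rfl⟩
    · rintro x y ⟨x', ⟨u, hu, rfl⟩, rfl⟩ ⟨y', ⟨v, hv, rfl⟩, rfl⟩
      exact ⟨u.2 + v.2 + fun i => 2 * (u.2 i * v.2 i),
        ⟨u + v + ((0 : Fin α → Z2), fun i => 2 * (u.2 i * v.2 i)),
          hPel hP u hu v hv, rfl⟩, gray_add' u.2 v.2⟩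
    · intro c x hx
      have hc : c = 0 ∨ c = 1 := by revert c; decide
      rcases hc with rfl | rfl
      · rw [zero_smul]
        exact ⟨0, ⟨0, hD0, rfl⟩, gray_zero'⟩
      · rw [one_smul]
        exact hx
  have hP_of_S : (∃ S : Submodule Z2 ((Fin α → Z2) × ((Fin β ⊕ Fin β) → Z2)),
      (S : Set _) = extGray (ι := Fin α) (κ := Fin β) '' D) → P := by
    rintro ⟨S, hS⟩ u hu v hv
    have hu' : extGray u ∈ S := by
      rw [← SetLike.mem_coe, hS]; exact ⟨u, hu, rfl⟩
    have hv' : extGray v ∈ S := by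
      rw [← SetLike.mem_coe, hS]; exact ⟨v, hv, rfl⟩
    have hsum : extGray u + extGray v ∈ S := S.add_mem hu' hv'
    rw [← SetLike.mem_coe, hS] at hsum
    obtain ⟨w, hw, hwe⟩ := hsum
    have hweq : w = u + v + ((0 : Fin α → Z2), fun i => 2 * (u.2 i * v.2 i)) :=
      extGray_injective (hwe.trans (extGray_add' u v).symm)
    rw [hweq] at hw
    have he : (((0 : Fin α → Z2), fun i => 2 * (u.2 i * v.2 i)) :
        (Fin α → Z2) × (Fin β → Z4)) ∈ D := by
      have h1 := hDsub _ hw _ (hDadd u hu v hv)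
      rwa [add_sub_cancel_left] at h1
    have he' : ident (((0 : Fin α → Z2), fun i => 2 * (u.2 i * v.2 i)) :
        (Fin α → Z2) × (Fin β → Z4)) ∈ C := he
    rw [hidentE u v] at he'
    exact he'
  have hP_of_T : (∃ T : Submodule Z2 ((Fin β ⊕ Fin β) → Z2),
      (T : Set _) = gray (ι := Fin β) '' (Prod.snd '' D)) → P := by
    rintro ⟨T, hT⟩ u hu v hv
    have hu' : gray u.2 ∈ T := by
      rw [← SetLike.mem_coe, hT]; exact ⟨u.2, ⟨u, hu, rfl⟩, rfl⟩
    have hv' : gray v.2 ∈ T := by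
      rw [← SetLike.mem_coe, hT]; exact ⟨v.2, ⟨v, hv, rfl⟩, rfl⟩
    have hsum : gray u.2 + gray v.2 ∈ T := T.add_mem hu' hv'
    rw [← SetLike.mem_coe, hT] at hsum
    obtain ⟨y, ⟨w, hw, rfl⟩, hye⟩ := hsum
    have hw2 : w.2 = u.2 + v.2 + fun i => 2 * (u.2 i * v.2 i) :=
      gray_injective (hye.trans (gray_add' u.2 v.2).symm)
    have hw' : w - u - v ∈ D := hDsub _ (hDsub _ hw _ hu) _ hv
    have hw'2 : (w - u - v).2 = fun i => 2 * (u.2 i * v.2 i) := by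
      show w.2 - u.2 - v.2 = _
      rw [hw2]
      abel
    have hstar := star_mem_C b f C hCb (w - u - v) hw' ?_
    · rw [hw'2] at hstar
      exact hstar
    · intro i
      exact ⟨u.2 i * v.2 i, by rw [congrFun hw'2 i]⟩
  constructor
  · intro hs
    exact hT_of_P (hP_of_S hs)
  · intro ht
    exact hS_of_P (hP_of_T ht)
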